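/- Let p be a prime, K a finite extension of ℚ_p with ring of integers 𝔬 and normalized additive valuation ord, and let B ∈ 𝓗_n(𝔬)^{nd}. Then the set S({B}) ⊆ ℤ_{≥0}^n has a greatest element with respect to the lexicographic order; that is, there exists a ∈ S({B}) such that b ⪯_lex a for every b ∈ S({B}) (so that the Gross–Keating invariant GK(B) is well defined). -/

import Mathlib

open scoped Classical
open Matrix

/-- `S(B)`: nondecreasing sequences `(a_1,…,a_n)` of nonnegative integers with
`ord(b_ii) ≥ a_i` and `ord(2 b_ij) ≥ (a_i+a_j)/2`. -/
def Sset {K : Type} [Field K] (v : AddValuation K (WithTop ℤ)) {n : ℕ}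
    (B : Matrix (Fin n) (Fin n) K) : Set (Fin n → ℕ) :=
  {a | Monotone a ∧ (∀ i, ((a i : ℤ) : WithTop ℤ) ≤ v (B i i)) ∧
    ∀ i j, (((a i : ℤ) + (a j : ℤ) : ℤ) : WithTop ℤ) ≤ v (2 * B i j) + v (2 * B i j)}

/-- `S({B}) = ⋃_{U ∈ GL_n(𝔬)} S(ᵗU·B·U)`. -/
def SsetFull {K : Type} [Field K] (v : AddValuation K (WithTop ℤ)) {n : ℕ}
    (B : Matrix (Fin n) (Fin n) K) : Set (Fin n → ℕ) :=
  {a | ∃ U : Matrix (Fin n) (Fin n) K, (∀ i j, 0 ≤ v (U i j)) ∧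
    (∃ W : Matrix (Fin n) (Fin n) K,
      (∀ i j, 0 ≤ v (W i j)) ∧ U * W = 1 ∧ W * U = 1) ∧
    a ∈ Sset v (Uᵀ * B * U)}

/-- The lexicographic order on `Fin n → ℕ` (`a ⪯_lex b`). -/
def lexLe {n : ℕ} (a b : Fin n → ℕ) : Prop :=
  a = b ∨ ∃ k : Fin n, (∀ l : Fin n, l < k → a l = b l) ∧ a k < b k

/-- `𝔢_i(a)` for a sequence `a` (with `i` ranging over `1,…,n`, 1-based). -/
def eGK {n : ℕ} (a : Fin n → ℕ) (i : ℕ) : ℕ :=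
  if Odd i then ∑ k ∈ Finset.univ.filter (fun k : Fin n => (k : ℕ) < i), a k
  else 2 * ((∑ k ∈ Finset.univ.filter (fun k : Fin n => (k : ℕ) < i), a k) / 2)

/- ### Auxiliary lemmas -/

lemma half_le_aux {s : ℤ} {X : WithTop ℤ} (h : ((s + s : ℤ) : WithTop ℤ) ≤ X + X) :
    (s : WithTop ℤ) ≤ X := by
  cases X with
  | top => exact le_top
  | coe m =>
      rw [← WithTop.coe_add] at h
      have h' : s + s ≤ m + m := by exact_mod_cast h
      rw [WithTop.coe_le_coe]
      omega

section Helpers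
variable {K : Type} [Field K] (v : AddValuation K (WithTop ℤ))

lemma v_prod_aux {ι : Type*} (s : Finset ι) (f : ι → K) :
    v (∏ i ∈ s, f i) = ∑ i ∈ s, v (f i) := by
  classical
  induction s using Finset.cons_induction with
  | empty => simp
  | cons a s ha ih => rw [Finset.prod_cons, Finset.sum_cons, AddValuation.map_mul, ih]

lemma v_det_nonneg_aux {n : ℕ} (U : Matrix (Fin n) (Fin n) K) (h : ∀ i j, 0 ≤ v (U i j)) :
    0 ≤ v U.det := by
  rw [Matrix.det_apply]
  refine AddValuation.map_le_sum v ?_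
  intro σ _
  have hv : v ((Equiv.Perm.sign σ : ℤˣ) • ∏ i, U (σ i) i) = ∑ i, v (U (σ i) i) := by
    rcases Int.units_eq_one_or (Equiv.Perm.sign σ) with hs | hs <;>
      simp [hs, Units.smul_def, AddValuation.map_neg, v_prod_aux]
  rw [hv]
  exact Finset.sum_nonneg fun i _ => h _ _

lemma sum_le_v_det_aux {n : ℕ} (C : Matrix (Fin n) (Fin n) K) (a : Fin n → ℕ)
    (h : ∀ i j, (((a i : ℤ) + (a j : ℤ) : ℤ) : WithTop ℤ) ≤ v (2 * C i j) + v (2 * C i j)) :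
    (((∑ i, a i : ℕ) : ℤ) : WithTop ℤ) ≤ v (((2 : K) • C).det) := by
  rw [Matrix.det_apply]
  refine AddValuation.map_le_sum v ?_
  intro σ _
  have hv : v ((Equiv.Perm.sign σ : ℤˣ) • ∏ i, ((2:K) • C) (σ i) i)
      = ∑ i, v (2 * C (σ i) i) := by
    rcases Int.units_eq_one_or (Equiv.Perm.sign σ) with hs | hs <;>
      simp [hs, Units.smul_def, AddValuation.map_neg, v_prod_aux, Matrix.smul_apply,
        smul_eq_mul]
  rw [hv]
  apply half_le_aux
  calc (((∑ i, a i : ℕ) + (∑ i, a i : ℕ) : ℤ) : WithTop ℤ)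
      = ∑ i : Fin n, (((a (σ i) : ℤ) + (a i : ℤ) : ℤ) : WithTop ℤ) := by
        push_cast
        rw [Finset.sum_add_distrib]
        congr 1
        exact (Equiv.sum_comp σ fun x => ((a x : ℕ) : WithTop ℤ)).symm
    _ ≤ ∑ i : Fin n, (v (2 * C (σ i) i) + v (2 * C (σ i) i)) :=
        Finset.sum_le_sum fun i _ => h (σ i) i
    _ = (∑ i, v (2 * C (σ i) i)) + ∑ i, v (2 * C (σ i) i) := by
        rw [Finset.sum_add_distrib]

end Helpers

lemma lexLe_of_toLex_le {n : ℕ} {b a : Fin n → ℕ}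
    (h : toLex b ≤ toLex a) : lexLe b a := by
  rcases eq_or_lt_of_le h with h | h
  · exact Or.inl (toLex.injective h)
  · obtain ⟨k, hk, hk2⟩ := h
    exact Or.inr ⟨k, hk, hk2⟩

theorem statement6 (p : ℕ) [Fact (Nat.Prime p)]
    (K : Type) [Field K] [Algebra ℚ_[p] K] [FiniteDimensional ℚ_[p] K]
    [Algebra ℤ_[p] K] [IsScalarTower ℤ_[p] ℚ_[p] K]
    (v : AddValuation K (WithTop ℤ))
    (hv0 : ∀ x : K, v x = ⊤ ↔ x = 0)
    (hvint : ∀ x : K, 0 ≤ v x ↔ IsIntegral ℤ_[p] x)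
    (hvnorm : ∃ π : K, v π = 1)
    (n : ℕ)
    (B : Matrix (Fin n) (Fin n) K) (hsymm : B.IsSymm)
    (hdiag : ∀ i, 0 ≤ v (B i i))
    (hoff : ∀ i j, i ≠ j → 0 ≤ v (2 * B i j))
    (hnd : B.det ≠ 0) :
    ∃ a ∈ SsetFull v B, ∀ b ∈ SsetFull v B, lexLe b a := by
  classical
  -- v 2 ≥ 0
  have hv2 : (0 : WithTop ℤ) ≤ v (2 : K) := by
    have h11 : (2 : K) = 1 + 1 := by norm_num
    have := AddValuation.map_add v (1 : K) (1 : K)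
    rw [AddValuation.map_one] at this
    simpa [h11] using this
  -- 0 is in SsetFull
  have hone : ∀ i j : Fin n, (0 : WithTop ℤ) ≤ v ((1 : Matrix (Fin n) (Fin n) K) i j) := by
    intro i j
    rcases eq_or_ne i j with rfl | hij
    · simp [Matrix.one_apply_eq]
    · simp [Matrix.one_apply_ne hij]
  have h2Bnn : ∀ i j : Fin n, (0 : WithTop ℤ) ≤ v (2 * B i j) := by
    intro i j
    rcases eq_or_ne i j with rfl | hij
    · rw [AddValuation.map_mul]
      exact add_nonneg hv2 (hdiag i)
    · exact hoff i j hij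
  have hS0 : (0 : Fin n → ℕ) ∈ SsetFull v B := by
    refine ⟨1, hone, ⟨1, hone, one_mul 1, one_mul 1⟩, ?_⟩
    refine ⟨monotone_const, ?_, ?_⟩
    · intro i
      simpa using hdiag i
    · intro i j
      have := h2Bnn i j
      simp only [Matrix.transpose_one, Matrix.one_mul, Matrix.mul_one]
      simpa using add_nonneg this this
  -- the uniform bound
  set Ntop : WithTop ℤ := v ((2 : K) ^ n) + v B.det with hNtopdef
  have hNne : Ntop ≠ ⊤ := by
    haveI : CharZero K := charZero_of_injective_algebraMap (algebraMap ℚ_[p] K).injective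
    have h2n : ((2 : K) ^ n) ≠ 0 := pow_ne_zero n (by norm_num)
    have h1 : v ((2 : K) ^ n) ≠ ⊤ := fun h => h2n ((hv0 _).mp h)
    have h2 : v B.det ≠ ⊤ := fun h => hnd ((hv0 _).mp h)
    exact WithTop.add_ne_top.mpr ⟨h1, h2⟩
  obtain ⟨N, hN⟩ : ∃ N : ℤ, Ntop = (N : WithTop ℤ) := by
    cases hx : Ntop with
    | top => exact absurd hx hNne
    | coe m => exact ⟨m, rfl⟩
  have hbound : ∀ a ∈ SsetFull v B, ∀ i : Fin n, a i ≤ N.toNat := by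
    rintro a ⟨U, hU, ⟨W, hW, hUW, hWU⟩, hmono, hdiag', hsum⟩ i
    -- v (det U) = 0
    have hdU : 0 ≤ v U.det := v_det_nonneg_aux v U hU
    have hdW : 0 ≤ v W.det := v_det_nonneg_aux v W hW
    have hdUW : v U.det + v W.det = 0 := by
      rw [← AddValuation.map_mul, ← Matrix.det_mul, hUW, Matrix.det_one, AddValuation.map_one]
    have hdU0 : v U.det = 0 := by
      have h1 : v U.det ≤ 0 := by
        calc v U.det = v U.det + 0 := (add_zero _).symm
          _ ≤ v U.det + v W.det := by exact add_le_add le_rfl hdW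
          _ = 0 := hdUW
      exact le_antisymm h1 hdU
    -- the determinant computation
    have hkey := sum_le_v_det_aux v (Uᵀ * B * U) a hsum
    have hdetval : v (((2 : K) • (Uᵀ * B * U)).det) = Ntop := by
      rw [Matrix.det_smul, Fintype.card_fin, Matrix.det_mul, Matrix.det_mul,
        Matrix.det_transpose, AddValuation.map_mul, AddValuation.map_mul,
        AddValuation.map_mul, hdU0, hNtopdef]
      simp
    rw [hdetval, hN] at hkey
    have hsumle : ((∑ j, a j : ℕ) : ℤ) ≤ N := by exact_mod_cast hkey
    have hile : a i ≤ ∑ j, a j := Finset.single_le_sum (fun j _ => Nat.zero_le _) (Finset.mem_univ i)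
    omega
  -- finiteness
  have hfin : (SsetFull v B).Finite := by
    refine Set.Finite.subset (Set.Finite.pi (fun i : Fin n => Set.finite_Iic N.toNat)) ?_
    intro a ha
    rw [Set.mem_univ_pi]
    exact fun i => hbound a ha i
  -- extract the lexicographic maximum
  letI : LinearOrder (Lex (Fin n → ℕ)) := by
    have h : WellFoundedLT (Fin n) := inferInstance
    exact @Pi.Lex.linearOrder (Fin n) (fun _ => ℕ) _ h
      (fun _ => inferInstance)
  obtain ⟨a, haS, hamax⟩ :=
    Finset.exists_max_image hfin.toFinset (toLex : (Fin n → ℕ) → Lex (Fin n → ℕ))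
      ⟨0, hfin.mem_toFinset.mpr hS0⟩
  refine ⟨a, hfin.mem_toFinset.mp haS, fun b hb => ?_⟩
  rcases eq_or_lt_of_le (hamax b (hfin.mem_toFinset.mpr hb)) with h | h
  · exact Or.inl (toLex.injective h)
  · obtain ⟨k, hk, hk2⟩ := h
    exact Or.inr ⟨k, hk, hk2⟩
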